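/- Let −M−1 < θ < N+1 be integers (M, N finite for this statement), let a_i, b_i, μ_i > 0 on E = {−M,…,N}, and fix γ > 1. Define the connected chain on Ē = {−M,…,N+1} with measure μ̄_i = μ_i for i ≤ θ−1, μ̄_θ = μ_θ/γ, μ̄_{θ+1} = (γ−1)μ_θ/γ, μ̄_i = μ_{i−1} for i ≥ θ+2, and rates satisfying μ̄_i ā_i = μ_i a_i for i ≤ θ, μ̄_θ b̄_θ = (γ−1)μ_θ/γ, μ̄_i b̄_i = μ_{i−1} b_{i−1} for i ≥ θ+1. Given f : E → ℝ, define f̄ : Ē → ℝ by f̄_i = f_i for i ≤ θ and f̄_i = f_{i−1} for i ≥ θ+1. Then ∑_{i∈Ē} μ̄_i f̄_i² = ∑_{i∈E} μ_i f_i², and ∑_{−M < i ≤ θ} μ̄_i ā_i (f̄_i − f̄_{i−1})² + ∑_{θ+1 ≤ i ≤ N+1} μ̄_i b̄_i (f̄_{i+1} − f̄_i)² = ∑_{−M < i ≤ θ} μ_i a_i (f_i − f_{i−1})² + ∑_{θ ≤ i ≤ N} μ_i b_i (f_{i+1} − f_i)², with the boundary conventions f_{−M−1} = 0 and f_{N+1}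 = 0 (and correspondingly f̄_{−M−1} = 0, f̄_{N+2} = 0). -/

import Mathlib

lemma icc_eq_ioc (a b : ℤ) : Finset.Icc a b = Finset.Ioc (a-1) b := by
  ext x; simp [Finset.mem_Icc, Finset.mem_Ioc]

lemma shift_sum (g : ℤ → ℝ) (a b : ℤ) :
    ∑ i ∈ Finset.Icc (a+1) (b+1), g i = ∑ i ∈ Finset.Icc a b, g (i+1) := by
  rw [← Finset.map_add_right_Icc, Finset.sum_map]
  rfl

lemma split_sum (g : ℤ → ℝ) (a c b : ℤ) (h1 : a - 1 ≤ c) (h2 : c ≤ b) :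
    ∑ i ∈ Finset.Icc a b, g i
      = ∑ i ∈ Finset.Icc a c, g i + ∑ i ∈ Finset.Icc (c+1) b, g i := by
  have hc : c + 1 - 1 = c := by ring
  rw [icc_eq_ioc a b, icc_eq_ioc a c, icc_eq_ioc (c+1) b, hc,
      ← Finset.Ioc_union_Ioc_eq_Ioc h1 h2,
      Finset.sum_union (by simp [Finset.disjoint_left, Finset.mem_Ioc]; omega)]

/-- Splitting lemma for birth–death Dirichlet forms: duplicating the state `θ`
into two states (carrying fractions `1/γ` and `(γ−1)/γ` of the mass `μ θ`) and
extending `f` by repeating its value at `θ` preserves both the `L²(μ)`-norm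
and the Dirichlet form. -/
theorem stmt_19 (M N θ : ℤ) (hθ1 : -M ≤ θ) (hθ2 : θ ≤ N) (γ : ℝ) (hγ : 1 < γ)
    (a b μ abar bbar μbar f fbar : ℤ → ℝ)
    (hapos : ∀ i, -M ≤ i → i ≤ N → 0 < a i)
    (hbpos : ∀ i, -M ≤ i → i ≤ N → 0 < b i)
    (hμpos : ∀ i, -M ≤ i → i ≤ N → 0 < μ i)
    (hμbar1 : ∀ i, i ≤ θ - 1 → μbar i = μ i)
    (hμbarθ : μbar θ = μ θ / γ)
    (hμbarθ1 : μbar (θ + 1) = (γ - 1) * μ θ / γ)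
    (hμbar2 : ∀ i, θ + 2 ≤ i → μbar i = μ (i - 1))
    (habar : ∀ i, i ≤ θ → μbar i * abar i = μ i * a i)
    (hbbarθ : μbar θ * bbar θ = (γ - 1) * μ θ / γ)
    (hbbar : ∀ i, θ + 1 ≤ i → μbar i * bbar i = μ (i - 1) * b (i - 1))
    (hfL : f (-M - 1) = 0) (hfR : f (N + 1) = 0)
    (hfbar1 : ∀ i, i ≤ θ → fbar i = f i)
    (hfbar2 : ∀ i, θ + 1 ≤ i → fbar i = f (i - 1)) :
    (∑ i ∈ Finset.Icc (-M) (N + 1), μbar i * fbar i ^ 2 =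
        ∑ i ∈ Finset.Icc (-M) N, μ i * f i ^ 2) ∧
    (∑ i ∈ Finset.Icc (-M + 1) θ, μbar i * abar i * (fbar i - fbar (i - 1)) ^ 2 +
        ∑ i ∈ Finset.Icc (θ + 1) (N + 1), μbar i * bbar i * (fbar (i + 1) - fbar i) ^ 2 =
      ∑ i ∈ Finset.Icc (-M + 1) θ, μ i * a i * (f i - f (i - 1)) ^ 2 +
        ∑ i ∈ Finset.Icc θ N, μ i * b i * (f (i + 1) - f i) ^ 2) := by
  have hγ0 : γ ≠ 0 := by positivity
  constructor
  · -- L² norm preservation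
    rw [split_sum _ (-M) (θ+1) (N+1) (by omega) (by omega),
        split_sum _ (-M) (θ-1) (θ+1) (by omega) (by omega),
        split_sum _ (-M) (θ-1) N (by omega) (by omega)]
    have h1 : ∑ i ∈ Finset.Icc (-M) (θ-1), μbar i * fbar i ^ 2
        = ∑ i ∈ Finset.Icc (-M) (θ-1), μ i * f i ^ 2 := by
      apply Finset.sum_congr rfl
      intro i hi
      rw [Finset.mem_Icc] at hi
      rw [hμbar1 i hi.2, hfbar1 i (by omega)]
    have h2 : Finset.Icc (θ-1+1) (θ+1) = {θ, θ+1} := by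
      ext x; simp [Finset.mem_Icc]; omega
    have h3 : Finset.Icc (θ-1+1) N = {θ} ∪ Finset.Icc (θ+1) N := by
      ext x; simp [Finset.mem_Icc]; omega
    rw [h1, h2, h3, Finset.sum_pair (by omega : θ ≠ θ + 1),
        Finset.sum_union (by simp [Finset.mem_Icc])]
    have h4 : (θ+1) + 1 = θ + 2 := by ring
    have h5 : ∑ i ∈ Finset.Icc (θ+1+1) (N+1), μbar i * fbar i ^ 2
        = ∑ i ∈ Finset.Icc (θ+1) N, μ i * f i ^ 2 := by
      rw [shift_sum]
      apply Finset.sum_congr rfl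
      intro i hi
      rw [Finset.mem_Icc] at hi
      rw [hμbar2 (i+1) (by omega), hfbar2 (i+1) (by omega), add_sub_cancel_right]
    rw [h5, Finset.sum_singleton, hμbarθ, hμbarθ1, hfbar1 θ le_rfl,
        hfbar2 (θ+1) (by omega), add_sub_cancel_right]
    field_simp
    ring
  · -- Dirichlet form preservation
    have h1 : ∑ i ∈ Finset.Icc (-M+1) θ, μbar i * abar i * (fbar i - fbar (i - 1)) ^ 2
        = ∑ i ∈ Finset.Icc (-M+1) θ, μ i * a i * (f i - f (i - 1)) ^ 2 := by
      apply Finset.sum_congr rfl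
      intro i hi
      rw [Finset.mem_Icc] at hi
      rw [habar i hi.2, hfbar1 i hi.2, hfbar1 (i-1) (by omega)]
    have h2 : ∑ i ∈ Finset.Icc (θ+1) (N+1), μbar i * bbar i * (fbar (i + 1) - fbar i) ^ 2
        = ∑ i ∈ Finset.Icc θ N, μ i * b i * (f (i + 1) - f i) ^ 2 := by
      rw [shift_sum]
      apply Finset.sum_congr rfl
      intro i hi
      rw [Finset.mem_Icc] at hi
      rw [hbbar (i+1) (by omega), hfbar2 (i+1+1) (by omega), hfbar2 (i+1) (by omega),
          add_sub_cancel_right, add_sub_cancel_right]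
    rw [h1, h2]
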